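/- (Identifiability.) Let D = (V, A) be the directed graph of a finite simple graph G = (V,E). Suppose s₁, s₂ : E → ℝ_{>0} and t₁, t₂ assign positive reals to every proper nonempty subset B ⊊ V, and that for every arc (v→w) ∈ A, s₁(v,w) Π_B (t₁)_B^{u_{v→w}(B)} = s₂(v,w) Π_B (t₂)_B^{u_{v→w}(B)} (i.e., the two parameterizations yield the same values P_{v→w}). Then s₁(e) = s₂(e) for every edge e ∈ E, and Π_B (t₁)_B^{u_a(B)} = Π_B (t₂)_B^{u_a(B)} for every arc a ∈ A. -/
import Mathlib


open Finset

/-- identifiability: if two parameterizations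
`s(v,w) Π_B t_B^{u_{v→w}(B)}` (with `s` symmetric positive on edges and all `t_B > 0`)
agree on every arc, then the symmetric parts agree on every edge and the monomial parts
agree on every arc. -/
theorem stmt_15 {V : Type*} [Fintype V] [DecidableEq V]
    (G : SimpleGraph V)
    (s₁ s₂ : V → V → ℝ)
    (h₁sym : ∀ v w, s₁ v w = s₁ w v) (h₂sym : ∀ v w, s₂ v w = s₂ w v)
    (h₁pos : ∀ v w, G.Adj v w → 0 < s₁ v w) (h₂pos : ∀ v w, G.Adj v w → 0 < s₂ v w)
    (t₁ t₂ : Finset V → ℝ)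
    (ht₁ : ∀ B : Finset V, B.Nonempty → B ≠ Finset.univ → 0 < t₁ B)
    (ht₂ : ∀ B : Finset V, B.Nonempty → B ≠ Finset.univ → 0 < t₂ B)
    (heq : ∀ v w, G.Adj v w →
      s₁ v w * (∏ B ∈ univ.filter
          (fun B : Finset V => B.Nonempty ∧ B ≠ Finset.univ ∧ v ∈ B ∧ w ∉ B), t₁ B)
        * (∏ B ∈ univ.filter
          (fun B : Finset V => B.Nonempty ∧ B ≠ Finset.univ ∧ w ∈ B ∧ v ∉ B), t₁ B)⁻¹ =
      s₂ v w * (∏ B ∈ univ.filter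
          (fun B : Finset V => B.Nonempty ∧ B ≠ Finset.univ ∧ v ∈ B ∧ w ∉ B), t₂ B)
        * (∏ B ∈ univ.filter
          (fun B : Finset V => B.Nonempty ∧ B ≠ Finset.univ ∧ w ∈ B ∧ v ∉ B), t₂ B)⁻¹) :
    (∀ v w, G.Adj v w → s₁ v w = s₂ v w) ∧
    (∀ v w, G.Adj v w →
      (∏ B ∈ univ.filter
          (fun B : Finset V => B.Nonempty ∧ B ≠ Finset.univ ∧ v ∈ B ∧ w ∉ B), t₁ B)
        * (∏ B ∈ univ.filter
          (fun B : Finset V => B.Nonempty ∧ B ≠ Finset.univ ∧ w ∈ B ∧ v ∉ B), t₁ B)⁻¹ =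
      (∏ B ∈ univ.filter
          (fun B : Finset V => B.Nonempty ∧ B ≠ Finset.univ ∧ v ∈ B ∧ w ∉ B), t₂ B)
        * (∏ B ∈ univ.filter
          (fun B : Finset V => B.Nonempty ∧ B ≠ Finset.univ ∧ w ∈ B ∧ v ∉ B), t₂ B)⁻¹) := by
  have Ppos : ∀ (t : Finset V → ℝ), (∀ B : Finset V, B.Nonempty → B ≠ Finset.univ → 0 < t B) →
      ∀ v w : V, 0 < ∏ B ∈ univ.filter
        (fun B : Finset V => B.Nonempty ∧ B ≠ Finset.univ ∧ v ∈ B ∧ w ∉ B), t B := by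
    intro t ht v w
    apply Finset.prod_pos
    intro B hB
    simp only [mem_filter] at hB
    exact ht B hB.2.1 hB.2.2.1
  have key : ∀ v w, G.Adj v w →
      s₁ v w * (∏ B ∈ univ.filter
          (fun B : Finset V => B.Nonempty ∧ B ≠ Finset.univ ∧ v ∈ B ∧ w ∉ B), t₁ B)
        * (∏ B ∈ univ.filter
          (fun B : Finset V => B.Nonempty ∧ B ≠ Finset.univ ∧ w ∈ B ∧ v ∉ B), t₂ B) =
      s₂ v w * (∏ B ∈ univ.filter
          (fun B : Finset V => B.Nonempty ∧ B ≠ Finset.univ ∧ v ∈ B ∧ w ∉ B), t₂ B)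
        * (∏ B ∈ univ.filter
          (fun B : Finset V => B.Nonempty ∧ B ≠ Finset.univ ∧ w ∈ B ∧ v ∉ B), t₁ B) := by
    intro v w hvw
    have e1 := heq v w hvw
    have q1 := (Ppos t₁ ht₁ w v).ne'
    have q2 := (Ppos t₂ ht₂ w v).ne'
    field_simp at e1
    linarith [e1]
  have hs : ∀ v w, G.Adj v w → s₁ v w = s₂ v w := by
    intro v w hvw
    have k1 := key v w hvw
    have k2 := key w v hvw.symm
    rw [h₁sym w v, h₂sym w v] at k2
    set P₁ := ∏ B ∈ univ.filter
        (fun B : Finset V => B.Nonempty ∧ B ≠ Finset.univ ∧ v ∈ B ∧ w ∉ B), t₁ B with hP₁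
    set Q₁ := ∏ B ∈ univ.filter
        (fun B : Finset V => B.Nonempty ∧ B ≠ Finset.univ ∧ w ∈ B ∧ v ∉ B), t₁ B with hQ₁
    set P₂ := ∏ B ∈ univ.filter
        (fun B : Finset V => B.Nonempty ∧ B ≠ Finset.univ ∧ v ∈ B ∧ w ∉ B), t₂ B with hP₂
    set Q₂ := ∏ B ∈ univ.filter
        (fun B : Finset V => B.Nonempty ∧ B ≠ Finset.univ ∧ w ∈ B ∧ v ∉ B), t₂ B with hQ₂
    have p1 : 0 < P₁ := Ppos t₁ ht₁ v w
    have q1 : 0 < Q₁ := Ppos t₁ ht₁ w v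
    have p2 : 0 < P₂ := Ppos t₂ ht₂ v w
    have q2 : 0 < Q₂ := Ppos t₂ ht₂ w v
    have hs1 := h₁pos v w hvw
    have hs2 := h₂pos v w hvw
    -- k1 : s₁ v w * P₁ * Q₂ = s₂ v w * P₂ * Q₁
    -- k2 : s₁ v w * Q₁ * P₂ = s₂ v w * Q₂ * P₁
    have k3 : (s₁ v w * P₁ * Q₂) * (s₁ v w * Q₁ * P₂) =
        (s₂ v w * P₂ * Q₁) * (s₂ v w * Q₂ * P₁) := by rw [k1, k2]
    have hfac : 0 < P₁ * Q₁ * P₂ * Q₂ := by positivity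
    have hsq : s₁ v w ^ 2 = s₂ v w ^ 2 := by
      have : s₁ v w ^ 2 * (P₁ * Q₁ * P₂ * Q₂) = s₂ v w ^ 2 * (P₁ * Q₁ * P₂ * Q₂) := by
        ring_nf
        ring_nf at k3
        linarith [k3]
      exact mul_right_cancel₀ hfac.ne' this
    nlinarith [hsq, hs1, hs2]
  refine ⟨hs, ?_⟩
  intro v w hvw
  have k1 := key v w hvw
  rw [hs v w hvw] at k1
  have q1 := (Ppos t₁ ht₁ w v).ne'
  have q2 := (Ppos t₂ ht₂ w v).ne'
  have hs2 := (h₂pos v w hvw).ne'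
  field_simp
  exact mul_left_cancel₀ hs2 (by linear_combination k1)
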